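/- Let a < b be reals and let ρ : ℝ → ℝ be integrable with support contained in [a,b]. Let n ≥ 1, set μ_k = ∫_ℝ u^k ρ(u) du, and assume the Hankel determinants D_k = det(μ_{i+j})_{0≤i,j≤k−1} are nonzero for all 1 ≤ k ≤ n+1, so that the monic orthogonal polynomials p_0, p_1, ..., p_n with respect to ρ exist; set h_{n−1} = ∫_ℝ p_{n−1}(u)^2 ρ(u) du. Then for every real z ∉ [a,b], p_n(z) · ∫_ℝ (p_{n−1}(u) ρ(u)/(z − u)) du − p_{n−1}(z) · ∫_ℝ (p_n(u) ρ(u)/(z − u)) du = h_{n−1}. (Equivalently, the Riemann–Hilbert matrix Y_n(z) has determinant 1.) -/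

import Mathlib

open MeasureTheory

private lemma integrable_aux {a b : ℝ} {ρ : ℝ → ℝ} (hρ : Integrable ρ)
    (hsupp : Function.support ρ ⊆ Set.Icc a b) {f : ℝ → ℝ}
    (hfm : Measurable f) (hf : ContinuousOn f (Set.Icc a b)) :
    Integrable (fun u => f u * ρ u) := by
  obtain ⟨C, hC⟩ := isCompact_Icc.exists_bound_of_continuousOn hf
  have heq : (fun u => f u * ρ u) = fun u => (Set.Icc a b).indicator f u * ρ u := by
    funext u
    by_cases hu : u ∈ Set.Icc a b
    · rw [Set.indicator_of_mem hu]
    · rw [Set.indicator_of_notMem hu]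
      have hρu : ρ u = 0 := by
        by_contra h
        exact hu (hsupp h)
      simp [hρu]
  rw [heq]
  refine hρ.bdd_mul ((hfm.indicator measurableSet_Icc).aestronglyMeasurable)
    (c := max C 0) (Filter.Eventually.of_forall fun u => ?_)
  by_cases hu : u ∈ Set.Icc a b
  · rw [Set.indicator_of_mem hu]
    exact le_max_of_le_left (hC u hu)
  · rw [Set.indicator_of_notMem hu]
    simp

private lemma ortho_gen {a b : ℝ} {ρ : ℝ → ℝ} (hρ : Integrable ρ)
    (hsupp : Function.support ρ ⊆ Set.Icc a b) (p : Polynomial ℝ) (m : ℕ)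
    (h : ∀ j : ℕ, j < m → ∫ u : ℝ, p.eval u * u ^ j * ρ u = 0)
    (r : Polynomial ℝ) (hr : r.degree < (m : ℕ)) :
    ∫ u : ℝ, p.eval u * r.eval u * ρ u = 0 := by
  rcases eq_or_ne r 0 with rfl | hr0
  · simp
  have hm : r.natDegree < m := (Polynomial.natDegree_lt_iff_degree_lt hr0).mpr hr
  have hpt : ∀ u : ℝ, p.eval u * r.eval u * ρ u
      = ∑ j ∈ Finset.range m, r.coeff j * (p.eval u * u ^ j * ρ u) := by
    intro u
    rw [Polynomial.eval_eq_sum_range' hm u, Finset.mul_sum, Finset.sum_mul]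
    exact Finset.sum_congr rfl fun j _ => by ring
  simp_rw [hpt]
  rw [integral_finset_sum]
  · exact Finset.sum_eq_zero fun j _ => by
      rw [integral_const_mul, h j (Finset.mem_range.mp ‹j ∈ Finset.range m›)]
      simp
  · intro j _
    have : Integrable (fun u : ℝ => (r.coeff j * p.eval u * u ^ j) * ρ u) :=
      integrable_aux hρ hsupp
        (by fun_prop)
        (by fun_prop)
    simpa [mul_assoc] using this

/-- `det Yₙ = 1` for the Riemann–Hilbert matrix of orthogonal
polynomials: let `ρ` be integrable with support in `[a,b]`, with nonvanishing
Hankel determinants up to size `n+1`, and let `q`, `p` be the monic orthogonal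
polynomials of degrees `n-1` and `n` for `ρ`.  Then for every `z ∉ [a,b]`,
`p(z) ∫ q(u)ρ(u)/(z−u) du − q(z) ∫ p(u)ρ(u)/(z−u) du = h_{n-1} = ∫ q(u)² ρ(u) du`. -/
theorem riemann_hilbert_det_eq_one
    (a b : ℝ) (hab : a < b) (ρ : ℝ → ℝ) (hρ : Integrable ρ)
    (hsupp : Function.support ρ ⊆ Set.Icc a b)
    (n : ℕ) (hn : 1 ≤ n)
    (hD : ∀ k : ℕ, 1 ≤ k → k ≤ n + 1 →
      Matrix.det (Matrix.of fun i j : Fin k =>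
        ∫ u : ℝ, u ^ ((i : ℕ) + (j : ℕ)) * ρ u) ≠ 0)
    (p q : Polynomial ℝ)
    (hpmonic : p.Monic) (hpdeg : p.natDegree = n)
    (hqmonic : q.Monic) (hqdeg : q.natDegree = n - 1)
    (hportho : ∀ j : ℕ, j < n → ∫ u : ℝ, p.eval u * u ^ j * ρ u = 0)
    (hqortho : ∀ j : ℕ, j < n - 1 → ∫ u : ℝ, q.eval u * u ^ j * ρ u = 0)
    (z : ℝ) (hz : z ∉ Set.Icc a b) :
    p.eval z * (∫ u : ℝ, q.eval u * ρ u / (z - u)) -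
        q.eval z * (∫ u : ℝ, p.eval u * ρ u / (z - u))
      = ∫ u : ℝ, (q.eval u) ^ 2 * ρ u := by
  have hzu : ∀ u ∈ Set.Icc a b, z - u ≠ 0 := by
    intro u hu h
    exact hz (by rwa [sub_eq_zero.mp h])
  -- divided differences
  obtain ⟨A, hA⟩ := Polynomial.X_sub_C_dvd_sub_C_eval (a := z) (p := p)
  obtain ⟨B, hB⟩ := Polynomial.X_sub_C_dvd_sub_C_eval (a := z) (p := q)
  have hXz : (Polynomial.X - Polynomial.C z).Monic := Polynomial.monic_X_sub_C z
  -- degrees and leading coefficients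
  have hpC : (p - Polynomial.C (p.eval z)).natDegree = n := by
    rw [Polynomial.natDegree_sub_C, hpdeg]
  have hpCne : p - Polynomial.C (p.eval z) ≠ 0 := by
    intro h
    rw [h] at hpC
    simp at hpC
    omega
  have hAne : A ≠ 0 := by
    intro h
    rw [h, mul_zero] at hA
    exact hpCne hA
  have hAdeg : A.natDegree = n - 1 := by
    have := hpC
    rw [hA, Polynomial.natDegree_mul (hXz.ne_zero) hAne, Polynomial.natDegree_X_sub_C] at this
    omega
  have hAmonic : A.Monic := by
    have h1 : (p - Polynomial.C (p.eval z)).leadingCoeff = 1 := by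
      rw [Polynomial.leadingCoeff, hpC]
      have : (Polynomial.C (p.eval z)).coeff n = 0 := by
        rw [Polynomial.coeff_C, if_neg (by omega)]
      rw [Polynomial.coeff_sub, this, sub_zero, ← hpdeg]
      exact hpmonic
    rw [hA, Polynomial.leadingCoeff_mul, hXz.leadingCoeff, one_mul] at h1
    exact h1
  have hBdeg : B.degree < (n : ℕ) := by
    rcases eq_or_ne B 0 with rfl | hB0
    · rw [Polynomial.degree_zero]
      exact WithBot.bot_lt_coe n
    · have hqC : (q - Polynomial.C (q.eval z)).natDegree = n - 1 := by
        rw [Polynomial.natDegree_sub_C, hqdeg]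
      rw [hB, Polynomial.natDegree_mul (hXz.ne_zero) hB0, Polynomial.natDegree_X_sub_C] at hqC
      rw [Polynomial.degree_eq_natDegree hB0]
      exact_mod_cast (by omega : B.natDegree < n)
  have hAq : (A - q).degree < ((n - 1 : ℕ) : WithBot ℕ) := by
    rcases eq_or_ne A q with h | h
    · rw [h, sub_self, Polynomial.degree_zero]
      exact WithBot.bot_lt_coe _
    · have hdeg : A.degree = q.degree := by
        rw [Polynomial.degree_eq_natDegree hAne, Polynomial.degree_eq_natDegree hqmonic.ne_zero,
          hAdeg, hqdeg]
      have := Polynomial.degree_sub_lt hdeg hAne (by rw [hAmonic.leadingCoeff, hqmonic.leadingCoeff])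
      rwa [Polynomial.degree_eq_natDegree hAne, hAdeg] at this
  -- integrability
  have hIdiv : ∀ r : Polynomial ℝ, Integrable (fun u : ℝ => r.eval u * ρ u / (z - u)) := by
    intro r
    have h1 : Integrable (fun u : ℝ => (r.eval u / (z - u)) * ρ u) :=
      integrable_aux hρ hsupp (by fun_prop)
        ((r.continuous.continuousOn).div (by fun_prop) hzu)
    exact h1.congr (Filter.Eventually.of_forall fun u => by ring)
  have hImul : ∀ r s : Polynomial ℝ, Integrable (fun u : ℝ => r.eval u * s.eval u * ρ u) := by
    intro r s
    exact integrable_aux hρ hsupp (by fun_prop) (by fun_prop)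
  -- pointwise identity
  have key : ∀ u : ℝ, p.eval z * (q.eval u * ρ u / (z - u)) -
      q.eval z * (p.eval u * ρ u / (z - u))
      = q.eval u * A.eval u * ρ u - p.eval u * B.eval u * ρ u := by
    intro u
    by_cases hu : ρ u = 0
    · simp [hu]
    · have hmem : u ∈ Set.Icc a b := hsupp hu
      have hne : z - u ≠ 0 := hzu u hmem
      have h1 : p.eval u - p.eval z = (u - z) * A.eval u := by
        have := congrArg (Polynomial.eval u) hA
        simpa using this
      have h2 : q.eval u - q.eval z = (u - z) * B.eval u := by
        have := congrArg (Polynomial.eval u) hB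
        simpa using this
      have hp' : p.eval z = p.eval u + (z - u) * A.eval u := by linarith [h1]
      have hq' : q.eval z = q.eval u + (z - u) * B.eval u := by linarith [h2]
      rw [hp', hq']
      field_simp
      ring
  -- orthogonality consequences
  have hpB : ∫ u : ℝ, p.eval u * B.eval u * ρ u = 0 := by
    refine ortho_gen hρ hsupp p n hportho B hBdeg
  have hqAq : ∫ u : ℝ, q.eval u * (A - q).eval u * ρ u = 0 :=
    ortho_gen hρ hsupp q (n - 1) hqortho (A - q) hAq
  have hqA : ∫ u : ℝ, q.eval u * A.eval u * ρ u = ∫ u : ℝ, (q.eval u) ^ 2 * ρ u := by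
    have hsplit : ∫ u : ℝ, q.eval u * (A - q).eval u * ρ u
        = (∫ u : ℝ, q.eval u * A.eval u * ρ u) - ∫ u : ℝ, q.eval u * q.eval u * ρ u := by
      rw [← integral_sub (hImul q A) (hImul q q)]
      congr 1
      funext u
      simp [Polynomial.eval_sub]
      ring
    have hsq : ∫ u : ℝ, q.eval u * q.eval u * ρ u = ∫ u : ℝ, (q.eval u) ^ 2 * ρ u := by
      congr 1
      funext u
      ring
    rw [hqAq] at hsplit
    linarith [hsplit, hsq]
  -- main computation
  calc p.eval z * (∫ u : ℝ, q.eval u * ρ u / (z - u)) -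
        q.eval z * (∫ u : ℝ, p.eval u * ρ u / (z - u))
      = ∫ u : ℝ, (p.eval z * (q.eval u * ρ u / (z - u)) -
          q.eval z * (p.eval u * ρ u / (z - u))) := by
        rw [integral_sub ((hIdiv q).const_mul _) ((hIdiv p).const_mul _),
          integral_const_mul, integral_const_mul]
    _ = ∫ u : ℝ, (q.eval u * A.eval u * ρ u - p.eval u * B.eval u * ρ u) := by
        simp_rw [key]
    _ = (∫ u : ℝ, q.eval u * A.eval u * ρ u) - ∫ u : ℝ, p.eval u * B.eval u * ρ u :=
        integral_sub (hImul q A) (hImul p B)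
    _ = ∫ u : ℝ, (q.eval u) ^ 2 * ρ u := by rw [hpB, hqA, sub_zero]
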